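/- The combination of local non-bossiness and strategy-proofness does not imply weak non-bossiness: there exists a locally non-bossy, strategy-proof mechanism under which a student can change the set of unassigned students by a deviation that keeps her own assignment at a real school. -/

import Mathlib

/-- A preference profile: each student has a (strict) preference relation over
`Option S`, where `none` is the outside option `s₀` and `some s` is school `s`. -/
abbrev Profile (N S : Type*) := N → Option S → Option S → Prop

/-- A school choice context: strict priorities and capacities for each school. -/
structure SchoolContext (N S : Type*) where
  prio : S → N → N → Prop
  prio_sto : ∀ s, IsStrictTotalOrder N (prio s)
  cap : S → ℕ
  cap_pos : ∀ s, 1 ≤ cap s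

/-- Well-formedness of a profile: each student's preference is a strict linear order. -/
def ProfWF {N S : Type*} (P : Profile N S) : Prop :=
  ∀ i, IsStrictTotalOrder (Option S) (P i)

/-- Feasibility of an assignment: capacities are respected. -/
def Feasible {N S : Type*} (C : SchoolContext N S) (μ : N → Option S) : Prop :=
  ∀ s : S, {i | μ i = some s}.ncard ≤ C.cap s

/-- Individual rationality: no student prefers the outside option to her assignment. -/
def IndRat {N S : Type*} (P : Profile N S) (μ : N → Option S) : Prop :=
  ∀ i, ¬ P i none (μ i)

/-- Non-wastefulness: no student prefers a school with an unfilled seat. -/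
def NonWasteful {N S : Type*} (C : SchoolContext N S) (P : Profile N S)
    (μ : N → Option S) : Prop :=
  ∀ i (s : S), P i (some s) (μ i) → C.cap s ≤ {j | μ j = some s}.ncard

/-- No justified envy. -/
def NoJustifiedEnvy {N S : Type*} (C : SchoolContext N S) (P : Profile N S)
    (μ : N → Option S) : Prop :=
  ∀ i j (s : S), P i (some s) (μ i) → μ j = some s → ¬ C.prio s i j

/-- Stability of a matching. -/
def IsStable {N S : Type*} (C : SchoolContext N S) (P : Profile N S)
    (μ : N → Option S) : Prop :=
  Feasible C μ ∧ IndRat P μ ∧ NonWasteful C P μ ∧ NoJustifiedEnvy C P μ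

/-- Strategy-proofness of a mechanism. -/
def StrategyProof {N S : Type*} [DecidableEq N] (Φ : Profile N S → (N → Option S)) : Prop :=
  ∀ (P : Profile N S), ProfWF P → ∀ (i : N) (P'i : Option S → Option S → Prop),
    ProfWF (Function.update P i P'i) →
    ¬ P i (Φ (Function.update P i P'i) i) (Φ P i)

/-- Local non-bossiness: a unilateral deviation that keeps the deviator's
assignment keeps the whole set of students assigned there. -/
def LocallyNonBossy {N S : Type*} [DecidableEq N] (Φ : Profile N S → (N → Option S)) : Prop :=
  ∀ (P : Profile N S), ProfWF P → ∀ (i : N) (P'i : Option S → Option S → Prop),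
    ProfWF (Function.update P i P'i) → ∀ s : Option S,
    Φ P i = s → Φ (Function.update P i P'i) i = s →
    {j | Φ P j = s} = {j | Φ (Function.update P i P'i) j = s}

/-- Replace the preferences of the members of coalition `Cs` by `P'`. -/
def updateGroup {N S : Type*} (P : Profile N S) (Cs : Set N) (P' : Profile N S) :
    Profile N S :=
  fun i a b => (i ∈ Cs ∧ P' i a b) ∨ (i ∉ Cs ∧ P i a b)

/-- Local group strategy-proofness: no coalition of schoolmates can jointly misreport so
that all are weakly better off and one strictly better off. -/
def LocallyGSP {N S : Type*} (Φ : Profile N S → (N → Option S)) : Prop :=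
  ¬ ∃ (s : Option S) (P : Profile N S) (Cs : Set N) (P' : Profile N S),
      ProfWF P ∧ ProfWF (updateGroup P Cs P') ∧
      (∀ i ∈ Cs, Φ P i = s) ∧
      (∀ j ∈ Cs, ¬ P j (Φ P j) (Φ (updateGroup P Cs P') j)) ∧
      (∃ i ∈ Cs, P i (Φ (updateGroup P Cs P') i) (Φ P i))

/-- Local group non-bossiness: if a coalition of schoolmates jointly misreports with each
member keeping her assignment, the set of students at their common school is unchanged. -/
def LocallyGroupNonBossy {N S : Type*} (Φ : Profile N S → (N → Option S)) : Prop :=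
  ∀ (s : Option S) (P : Profile N S) (Cs : Set N) (P' : Profile N S),
    ProfWF P → ProfWF (updateGroup P Cs P') →
    (∀ i ∈ Cs, Φ P i = s) →
    (∀ i ∈ Cs, Φ (updateGroup P Cs P') i = Φ P i) →
    {j | Φ P j = s} = {j | Φ (updateGroup P Cs P') j = s}

/-- Weak non-bossiness (Bando–Imamura): a unilateral deviation keeping the deviator's
assignment keeps the set of unassigned students. -/
def WeakNonBossy {N S : Type*} [DecidableEq N] (Φ : Profile N S → (N → Option S)) : Prop :=
  ∀ (P : Profile N S), ProfWF P → ∀ (i : N) (P'i : Option S → Option S → Prop),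
    ProfWF (Function.update P i P'i) →
    Φ (Function.update P i P'i) i = Φ P i →
    {j | Φ P j = none} = {j | Φ (Function.update P i P'i) j = none}

open Classical in
noncomputable def myOmega : Profile (Fin 3) (Fin 2) → (Fin 3 → Option (Fin 2)) :=
  fun P i => if i = 2 then (if P 0 (some 1) (some 0) then some 1 else none) else some 0

lemma sto_of_rank (r : Option (Fin 2) → ℕ) (hr : Function.Injective r) :
    IsStrictTotalOrder (Option (Fin 2)) (fun a b => r a < r b) :=
  { trichotomous := fun a b => by
      intro h1 h2
      rcases lt_trichotomy (r a) (r b) with h | h | h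
      exacts [absurd h h1, hr h, absurd h h2]
    irrefl := fun a => lt_irrefl _
    trans := fun _ _ _ => lt_trans }

lemma myOmega_indep (P : Profile (Fin 3) (Fin 2)) (i : Fin 3) (hi : i ≠ 0)
    (P'i : Option (Fin 2) → Option (Fin 2) → Prop) :
    myOmega (Function.update P i P'i) = myOmega P := by
  funext j
  have h0 : Function.update P i P'i 0 = P 0 := Function.update_of_ne (Ne.symm hi) _ _
  simp only [myOmega]
  rw [h0]

/-- Local non-bossiness together with strategy-proofness does not imply weak
non-bossiness: in the three-student, two-school context with capacities (2,1),
regardless of the priority profile, there is a locally non-bossy and strategy-proof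
mechanism that is not weakly non-bossy. -/
theorem stmt17 (C : SchoolContext (Fin 3) (Fin 2))
    (hcap0 : C.cap 0 = 2) (hcap1 : C.cap 1 = 1) :
    ∃ Ω : Profile (Fin 3) (Fin 2) → (Fin 3 → Option (Fin 2)),
      (∀ P, ProfWF P → Feasible C (Ω P)) ∧
        LocallyNonBossy Ω ∧ StrategyProof Ω ∧ ¬ WeakNonBossy Ω := by
  refine ⟨myOmega, ?_, ?_, ?_, ?_⟩
  · -- Feasibility
    intro P _ s
    fin_cases s
    · show {i : Fin 3 | myOmega P i = some 0}.ncard ≤ C.cap 0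
      have hs : {i : Fin 3 | myOmega P i = some 0} = {0, 1} := by
        ext i
        fin_cases i <;> simp [myOmega] <;> split <;> simp
      rw [hs, hcap0, Set.ncard_pair (by decide)]
    · show {i : Fin 3 | myOmega P i = some 1}.ncard ≤ C.cap 1
      have hs : {i : Fin 3 | myOmega P i = some 1} ⊆ {2} := by
        intro i hi
        fin_cases i <;> simp_all [myOmega]
      calc {i : Fin 3 | myOmega P i = some 1}.ncard
          ≤ ({2} : Set (Fin 3)).ncard := Set.ncard_le_ncard hs (Set.finite_singleton _)
        _ = 1 := Set.ncard_singleton _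
        _ ≤ C.cap 1 := by rw [hcap1]
  · -- Locally non-bossy
    intro P _ i P'i _ s h1 h2
    by_cases hi : i = 0
    · subst hi
      have hs : s = some 0 := by simpa [myOmega] using h1.symm
      subst hs
      have e1 : {j : Fin 3 | myOmega P j = some 0} = {0, 1} := by
        ext j; fin_cases j <;> simp [myOmega] <;> split <;> simp
      have e2 : {j : Fin 3 | myOmega (Function.update P 0 P'i) j = some 0} = {0, 1} := by
        ext j; fin_cases j <;> simp [myOmega] <;> split <;> simp
      rw [e1, e2]
    · rw [myOmega_indep P i hi P'i]
  · -- Strategy-proof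
    intro P hP i P'i _
    have key : myOmega (Function.update P i P'i) i = myOmega P i := by
      by_cases hi : i = 0
      · subst hi; simp [myOmega]
      · rw [myOmega_indep P i hi P'i]
    rw [key]
    haveI := hP i
    exact irrefl_of (P i) _
  · -- Not weakly non-bossy
    intro hWNB
    set r1 : Option (Fin 2) → ℕ := fun a => match a with
      | some 1 => 0 | some 0 => 1 | none => 2 with hr1
    set r2 : Option (Fin 2) → ℕ := fun a => match a with
      | some 0 => 0 | some 1 => 1 | none => 2 with hr2
    have hinj1 : Function.Injective r1 := by decide
    have hinj2 : Function.Injective r2 := by decide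
    set P : Profile (Fin 3) (Fin 2) := fun _ a b => r1 a < r1 b with hPdef
    set P'i : Option (Fin 2) → Option (Fin 2) → Prop := fun a b => r2 a < r2 b with hP'def
    have hWF : ProfWF P := fun _ => sto_of_rank r1 hinj1
    have hWF' : ProfWF (Function.update P 0 P'i) := by
      intro j
      by_cases hj : j = 0
      · subst hj; rw [Function.update_self]; exact sto_of_rank r2 hinj2
      · rw [Function.update_of_ne hj]; exact sto_of_rank r1 hinj1
    have hkeep : myOmega (Function.update P 0 P'i) 0 = myOmega P 0 := by
      simp [myOmega]
    have heq := hWNB P hWF 0 P'i hWF' hkeep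
    have hP0 : P 0 (some 1) (some 0) := by simp [hPdef, hr1]
    have hP'0 : ¬ (Function.update P 0 P'i) 0 (some 1) (some 0) := by
      rw [Function.update_self]; simp [hP'def, hr2]
    have h2L : (2 : Fin 3) ∉ {j : Fin 3 | myOmega P j = none} := by
      simp [myOmega, hP0]
    have h2R : (2 : Fin 3) ∈ {j : Fin 3 | myOmega (Function.update P 0 P'i) j = none} := by
      simp [myOmega, hP'0]
    rw [heq] at h2L
    exact h2L h2R
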